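/- ODE analysis of the mass function: let N ≥ 2, B > 0, t₀ ∈ ℝ, and suppose M : (−∞, t₀] → [0,∞) is C¹, satisfies M(t₀) = 0, M(t) > 0 for t < t₀, and M'(t) = ((N−1)/N)·M(t) − ((N−1)/N)·B·M(t)^{(N−2)/(N−1)} for t < t₀. Then M(t) = [B·(1 − e^{(t−t₀)/N})]^{N−1} for all t ≤ t₀. -/

import Mathlib

theorem stmt14 (N : ℕ) (hN : 2 ≤ N) (B t₀ : ℝ) (hB : 0 < B)
    (M : ℝ → ℝ) (hcont : ContinuousOn M (Set.Iic t₀))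
    (hM0 : M t₀ = 0) (hpos : ∀ t < t₀, 0 < M t)
    (hderiv : ∀ t < t₀, HasDerivAt M
      (((N : ℝ) - 1) / N * M t -
        ((N : ℝ) - 1) / N * B * (M t) ^ (((N : ℝ) - 2) / ((N : ℝ) - 1))) t) :
    ∀ t ≤ t₀, M t = (B * (1 - Real.exp ((t - t₀) / N))) ^ ((N : ℝ) - 1) := by
  set n : ℝ := (N : ℝ) with hn
  have hn2 : (2 : ℝ) ≤ n := by rw [hn]; exact_mod_cast hN
  have hn0 : n ≠ 0 := by linarith
  have hn1 : n - 1 > 0 := by linarith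
  have hn1' : n - 1 ≠ 0 := ne_of_gt hn1
  set c : ℝ := 1 / (n - 1) with hc
  have hcpos : 0 < c := by positivity
  set H : ℝ → ℝ := fun t => Real.exp (-t / n) * (M t ^ c - B) with hH
  -- derivative of H is zero on (-∞, t₀)
  have hHderiv : ∀ s < t₀, HasDerivAt H 0 s := by
    intro s hs
    have hMs : 0 < M s := hpos s hs
    have hE : HasDerivAt (fun t : ℝ => Real.exp (-t / n)) (Real.exp (-s / n) * (-1 / n)) s :=
      (((hasDerivAt_id s).neg).div_const n).exp
    have hG : HasDerivAt (fun t => M t ^ c - B)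
        ((((n - 1) / n * M s - (n - 1) / n * B * M s ^ ((n - 2) / (n - 1))) * c * M s ^ (c - 1))) s :=
      ((hderiv s hs).rpow_const (Or.inl (ne_of_gt hMs))).sub_const B
    have := hE.mul hG
    refine HasDerivAt.congr_deriv this ?_
    have e1 : M s * M s ^ (c - 1) = M s ^ c := by
      nth_rewrite 1 [← Real.rpow_one (M s)]
      rw [← Real.rpow_add hMs]
      ring_nf
    have e2 : M s ^ ((n - 2) / (n - 1)) * M s ^ (c - 1) = 1 := by
      rw [← Real.rpow_add hMs]
      rw [show (n - 2) / (n - 1) + (c - 1) = 0 by rw [hc]; field_simp; ring]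
      exact Real.rpow_zero _
    have key : ((n - 1) / n * M s - (n - 1) / n * B * M s ^ ((n - 2) / (n - 1))) * c * M s ^ (c - 1)
        = (M s ^ c - B) / n := by
      have h3 : (n - 1) / n * c = 1 / n := by rw [hc]; field_simp
      calc ((n - 1) / n * M s - (n - 1) / n * B * M s ^ ((n - 2) / (n - 1))) * c * M s ^ (c - 1)
          = (n - 1) / n * c * (M s * M s ^ (c - 1))
            - (n - 1) / n * c * B * (M s ^ ((n - 2) / (n - 1)) * M s ^ (c - 1)) := by ring
        _ = (M s ^ c - B) / n := by rw [e1, e2, h3]; ring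
    rw [key]
    ring
  -- H is constant on Iic t₀
  have hconst : ∀ t ≤ t₀, H t = H t₀ := by
    intro t ht
    rcases eq_or_lt_of_le ht with rfl | ht
    · rfl
    have hHcont : ContinuousOn H (Set.Icc t t₀) := by
      apply ContinuousOn.mul
      · exact (Real.continuous_exp.comp ((continuous_id.neg).div_const n)).continuousOn
      · apply ContinuousOn.sub _ continuousOn_const
        exact ContinuousOn.rpow_const (hcont.mono (fun x hx => hx.2))
          (fun x hx => Or.inr (le_of_lt hcpos))
    have := constant_of_has_deriv_right_zero hHcont
      (fun x hx => ((hHderiv x (lt_of_lt_of_le hx.2 (le_refl t₀))).hasDerivWithinAt))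
    exact (this t₀ ⟨le_of_lt ht, le_refl t₀⟩).symm
  -- conclude
  intro t ht
  rcases eq_or_lt_of_le ht with rfl | ht
  · rw [hM0, sub_self, zero_div, Real.exp_zero, sub_self, mul_zero,
      Real.zero_rpow (ne_of_gt hn1)]
  · have hMt := hpos t ht
    have hkey : M t ^ c = B * (1 - Real.exp ((t - t₀) / n)) := by
      have h := hconst t (le_of_lt ht)
      simp only [hH, hM0] at h
      rw [Real.zero_rpow (ne_of_gt hcpos)] at h
      have hexp : Real.exp (-t / n) ≠ 0 := Real.exp_ne_zero _
      have hE : Real.exp (-t₀ / n) = Real.exp ((t - t₀) / n) * Real.exp (-t / n) := by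
        rw [← Real.exp_add]; ring_nf
      rw [hE] at h
      have h2 : M t ^ c - B = Real.exp ((t - t₀) / n) * (0 - B) := by
        apply mul_left_cancel₀ hexp
        linear_combination h
      linear_combination h2
    have hpow : (M t ^ c) ^ (n - 1) = M t := by
      rw [← Real.rpow_mul (le_of_lt hMt),
        show c * (n - 1) = 1 by rw [hc]; field_simp, Real.rpow_one]
    rw [← hkey]
    exact hpow.symm
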